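/- arXiv:1412.0746 — 3 statements merged into one kernel-verified Lean document; each statement's English description precedes it below -/
import Mathlib

section
/- The curve γ(τ) = (2/((2-ατ)² + β²τ²))·((2-ατ)τ, βτ²) in ℝ², for fixed real α, β, satisfies the Euclidean conformal geodesic equation dA/dτ = 3((V·A)/(V·V))A − (3(A·A)/(2(V·V)))V, where V = dγ/dτ and A = d²γ/dτ², at every τ where V·V ≠ 0. -/
open RealInnerProductSpace Filter Topology

noncomputable def Dd (α β : ℝ) : ℝ → ℝ := fun s => (2 - α*s)^2 + β^2*s^2

noncomputable def NF0 (α β : ℝ) : ℝ → ℝ :=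
  fun s => 0 + 4*s + (-2*α)*s^2 + 0*s^3 + 0*s^4

noncomputable def NF1 (α β : ℝ) : ℝ → ℝ :=
  fun s => 16 + (-16*α)*s + (-4*β^2 + 4*α^2)*s^2 + 0*s^3 + 0*s^4

noncomputable def NF2 (α β : ℝ) : ℝ → ℝ :=
  fun s => (64*α) + (-96*β^2 - 96*α^2)*s + (48*α*β^2 + 48*α^3)*s^2 + (8*β^4 - 8*α^4)*s^3 + 0*s^4

noncomputable def NF3 (α β : ℝ) : ℝ → ℝ :=
  fun s => (-384*β^2 + 384*α^2) + (-768*α*β^2 - 768*α^3)*s + (576*β^4 + 1152*α^2*β^2 + 576*α^4)*s^2 + (-192*α*β^4 - 384*α^3*β^2 - 192*α^5)*s^3 + (-24*β^6 - 24*α^2*β^4 + 24*α^4*β^2 + 24*α^6)*s^4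

noncomputable def NG0 (α β : ℝ) : ℝ → ℝ :=
  fun s => 0 + 0*s + (2*β)*s^2 + 0*s^3 + 0*s^4

noncomputable def NG1 (α β : ℝ) : ℝ → ℝ :=
  fun s => 0 + (16*β)*s + (-8*α*β)*s^2 + 0*s^3 + 0*s^4

noncomputable def NG2 (α β : ℝ) : ℝ → ℝ :=
  fun s => (64*β) + 0*s + (-48*β^3 - 48*α^2*β)*s^2 + (16*α*β^3 + 16*α^3*β)*s^3 + 0*s^4

noncomputable def NG3 (α β : ℝ) : ℝ → ℝ :=
  fun s => (768*α*β) + (-768*β^3 - 768*α^2*β)*s + 0*s^2 + (192*β^5 + 384*α^2*β^3 + 192*α^4*β)*s^3 + (-48*α*β^5 - 96*α^3*β^3 - 48*α^5*β)*s^4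

noncomputable def E0 : EuclideanSpace ℝ (Fin 2) := EuclideanSpace.single 0 1
noncomputable def E1 : EuclideanSpace ℝ (Fin 2) := EuclideanSpace.single 1 1

noncomputable def Cv1 (α β : ℝ) (s : ℝ) : EuclideanSpace ℝ (Fin 2) :=
  (NF1 α β s / (Dd α β s)^2) • E0 + (NG1 α β s / (Dd α β s)^2) • E1

noncomputable def Cv2 (α β : ℝ) (s : ℝ) : EuclideanSpace ℝ (Fin 2) :=
  (NF2 α β s / (Dd α β s)^3) • E0 + (NG2 α β s / (Dd α β s)^3) • E1

noncomputable def Cv3 (α β : ℝ) (s : ℝ) : EuclideanSpace ℝ (Fin 2) :=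
  (NF3 α β s / (Dd α β s)^4) • E0 + (NG3 α β s / (Dd α β s)^4) • E1

lemma hpoly4 (a0 a1 a2 a3 a4 t : ℝ) :
    HasDerivAt (fun s : ℝ => a0 + a1*s + a2*s^2 + a3*s^3 + a4*s^4)
      (a1 + 2*a2*t + 3*a3*t^2 + 4*a4*t^3) t := by
  have h0 : HasDerivAt (fun _ : ℝ => a0) 0 t := hasDerivAt_const t a0
  have h1 : HasDerivAt (fun s : ℝ => a1*s) (a1*1) t := (hasDerivAt_id t).const_mul a1
  have h2 := (hasDerivAt_pow 2 t).const_mul a2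
  have h3 := (hasDerivAt_pow 3 t).const_mul a3
  have h4 := (hasDerivAt_pow 4 t).const_mul a4
  have := (((h0.add h1).add h2).add h3).add h4
  refine this.congr_deriv ?_
  push_cast
  ring

lemma hDd (α β t : ℝ) : HasDerivAt (Dd α β) (2*(2-α*t)*(-α) + β^2*(2*t)) t := by
  have hw : HasDerivAt (fun s : ℝ => 2 - α*s) (-(α*1)) t :=
    ((hasDerivAt_id t).const_mul α).const_sub 2
  have := (hw.pow 2).add ((hasDerivAt_pow 2 t).const_mul (β^2))
  refine this.congr_deriv ?_
  push_cast
  ring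

lemma step_f01 (α β t : ℝ) (h : Dd α β t ≠ 0) :
    HasDerivAt (fun s => NF0 α β s / Dd α β s) (NF1 α β t / (Dd α β t)^2) t := by
  have hN : HasDerivAt (NF0 α β) (4 + 2*(-2*α)*t + 3*0*t^2 + 4*0*t^3) t := hpoly4 _ _ _ _ _ t
  have := hN.div (hDd α β t) h
  refine this.congr_deriv ?_
  push_cast
  field_simp
  simp only [NF0, NF1, Dd]
  ring

lemma step_g01 (α β t : ℝ) (h : Dd α β t ≠ 0) :
    HasDerivAt (fun s => NG0 α β s / Dd α β s) (NG1 α β t / (Dd α β t)^2) t := by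
  have hN : HasDerivAt (NG0 α β) (0 + 2*(2*β)*t + 3*0*t^2 + 4*0*t^3) t := hpoly4 _ _ _ _ _ t
  have := hN.div (hDd α β t) h
  refine this.congr_deriv ?_
  push_cast
  field_simp
  simp only [NG0, NG1, Dd]
  ring

lemma step_f12 (α β t : ℝ) (h : Dd α β t ≠ 0) :
    HasDerivAt (fun s => NF1 α β s / (Dd α β s)^2) (NF2 α β t / (Dd α β t)^3) t := by
  have hN : HasDerivAt (NF1 α β)
      ((-16*α) + 2*(-4*β^2 + 4*α^2)*t + 3*0*t^2 + 4*0*t^3) t := hpoly4 _ _ _ _ _ t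
  have := hN.div ((hDd α β t).pow 2) (pow_ne_zero 2 h)
  refine this.congr_deriv ?_
  push_cast
  field_simp
  simp only [NF1, NF2, Dd, Pi.pow_apply]
  ring

lemma step_g12 (α β t : ℝ) (h : Dd α β t ≠ 0) :
    HasDerivAt (fun s => NG1 α β s / (Dd α β s)^2) (NG2 α β t / (Dd α β t)^3) t := by
  have hN : HasDerivAt (NG1 α β)
      ((16*β) + 2*(-8*α*β)*t + 3*0*t^2 + 4*0*t^3) t := hpoly4 _ _ _ _ _ t
  have := hN.div ((hDd α β t).pow 2) (pow_ne_zero 2 h)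
  refine this.congr_deriv ?_
  push_cast
  field_simp
  simp only [NG1, NG2, Dd, Pi.pow_apply]
  ring

lemma step_f23 (α β t : ℝ) (h : Dd α β t ≠ 0) :
    HasDerivAt (fun s => NF2 α β s / (Dd α β s)^3) (NF3 α β t / (Dd α β t)^4) t := by
  have hN : HasDerivAt (NF2 α β)
      ((-96*β^2 - 96*α^2) + 2*(48*α*β^2 + 48*α^3)*t + 3*(8*β^4 - 8*α^4)*t^2 + 4*0*t^3) t :=
    hpoly4 _ _ _ _ _ t
  have := hN.div ((hDd α β t).pow 3) (pow_ne_zero 3 h)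
  refine this.congr_deriv ?_
  push_cast
  field_simp
  simp only [NF2, NF3, Dd, Pi.pow_apply]
  ring

lemma step_g23 (α β t : ℝ) (h : Dd α β t ≠ 0) :
    HasDerivAt (fun s => NG2 α β s / (Dd α β s)^3) (NG3 α β t / (Dd α β t)^4) t := by
  have hN : HasDerivAt (NG2 α β)
      (0 + 2*(-48*β^3 - 48*α^2*β)*t + 3*(16*α*β^3 + 16*α^3*β)*t^2 + 4*0*t^3) t :=
    hpoly4 _ _ _ _ _ t
  have := hN.div ((hDd α β t).pow 3) (pow_ne_zero 3 h)
  refine this.congr_deriv ?_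
  push_cast
  field_simp
  simp only [NG2, NG3, Dd, Pi.pow_apply]
  ring

lemma curve1 (α β t : ℝ) (h : Dd α β t ≠ 0) :
    HasDerivAt (fun s => (NF0 α β s / Dd α β s) • E0 + (NG0 α β s / Dd α β s) • E1)
      (Cv1 α β t) t :=
  ((step_f01 α β t h).smul_const E0).add ((step_g01 α β t h).smul_const E1)

lemma curve2 (α β t : ℝ) (h : Dd α β t ≠ 0) :
    HasDerivAt (Cv1 α β) (Cv2 α β t) t :=
  ((step_f12 α β t h).smul_const E0).add ((step_g12 α β t h).smul_const E1)

lemma curve3 (α β t : ℝ) (h : Dd α β t ≠ 0) :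
    HasDerivAt (Cv2 α β) (Cv3 α β t) t :=
  ((step_f23 α β t h).smul_const E0).add ((step_g23 α β t h).smul_const E1)

lemma bridge (x y : ℝ) : (WithLp.toLp 2 ![x, y] : EuclideanSpace ℝ (Fin 2)) = x • E0 + y • E1 := by
  ext i
  fin_cases i <;> simp [E0, E1, EuclideanSpace.single_apply]

lemma hInner (a b c d : ℝ) : ⟪a•E0+b•E1, c•E0+d•E1⟫ = a*c + b*d := by
  simp [E0, E1, inner_add_left, inner_add_right, real_inner_smul_left, real_inner_smul_right,
    EuclideanSpace.inner_single_left, EuclideanSpace.single_apply]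
  ring

lemma combo (c d x y p q : ℝ) :
    c • (x•E0+y•E1) - d • (p•E0+q•E1) = (c*x - d*p)•E0 + (c*y - d*q)•E1 := by
  module

lemma ecomb {u v u' v' : ℝ} (h1 : u = u') (h2 : v = v') :
    u•E0+v•E1 = u'•E0+v'•E1 := by rw [h1, h2]


lemma final_scalar_f {f1 g1 f2 g2 f3 D : ℝ} (hD : D ≠ 0) (hN : f1^2+g1^2 ≠ 0)
    (hid : 2*f3*(f1^2+g1^2) = 6*(f1*f2+g1*g2)*f2 - 3*(f2^2+g2^2)*f1) :
    f3/D^4 = 3 * ((f1/D^2*(f2/D^3) + g1/D^2*(g2/D^3)) / ((f1^2+g1^2)/D^4)) * (f2/D^3)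
      - 3 * (f2/D^3*(f2/D^3) + g2/D^3*(g2/D^3)) / (2*((f1^2+g1^2)/D^4)) * (f1/D^2) := by
  field_simp
  linear_combination hid

lemma final_scalar_g {f1 g1 f2 g2 g3 D : ℝ} (hD : D ≠ 0) (hN : f1^2+g1^2 ≠ 0)
    (hid : 2*g3*(f1^2+g1^2) = 6*(f1*f2+g1*g2)*g2 - 3*(f2^2+g2^2)*g1) :
    g3/D^4 = 3 * ((f1/D^2*(f2/D^3) + g1/D^2*(g2/D^3)) / ((f1^2+g1^2)/D^4)) * (g2/D^3)
      - 3 * (f2/D^3*(f2/D^3) + g2/D^3*(g2/D^3)) / (2*((f1^2+g1^2)/D^4)) * (g1/D^2) := by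
  field_simp
  linear_combination hid

/-- The explicit curve `γ(τ) = (2/((2-ατ)² + β²τ²))·((2-ατ)τ, βτ²)` in `ℝ²`
satisfies the flat (Euclidean) conformal geodesic equation
`A' = 3((V·A)/(V·V))A − (3(A·A)/(2(V·V)))V` at every `τ` where `V·V ≠ 0`. -/
theorem stmt0 (α β : ℝ)
    (γ : ℝ → EuclideanSpace ℝ (Fin 2))
    (hγ : ∀ τ : ℝ, γ τ =
      (2 / ((2 - α * τ) ^ 2 + β ^ 2 * τ ^ 2)) • ![(2 - α * τ) * τ, β * τ ^ 2]) :
    ∀ τ : ℝ, ⟪deriv γ τ, deriv γ τ⟫ ≠ 0 →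
      deriv (deriv (deriv γ)) τ =
        (3 * (⟪deriv γ τ, deriv (deriv γ) τ⟫ / ⟪deriv γ τ, deriv γ τ⟫)) •
            deriv (deriv γ) τ -
          (3 * ⟪deriv (deriv γ) τ, deriv (deriv γ) τ⟫ /
              (2 * ⟪deriv γ τ, deriv γ τ⟫)) • deriv γ τ := by
  intro τ hVV
  by_cases hD : Dd α β τ = 0
  · -- degenerate case: β = 0 and 2 = ατ; γ is not differentiable at τ
    exfalso
    simp only [Dd] at hD
    have hw0 : 2 - α*τ = 0 := by nlinarith [sq_nonneg (2-α*τ), sq_nonneg (β*τ)]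
    have hb0 : β*τ = 0 := by nlinarith [sq_nonneg (2-α*τ), sq_nonneg (β*τ)]
    have hτ : τ ≠ 0 := by intro h; rw [h] at hw0; norm_num at hw0
    have hβ : β = 0 := by rcases mul_eq_zero.1 hb0 with h | h; exact h; exact absurd h hτ
    have hα : α ≠ 0 := by intro h; rw [h] at hw0; norm_num at hw0
    have hnd : ¬ DifferentiableAt ℝ γ τ := by
      intro hdiff
      have hφ : ContinuousAt (fun t => EuclideanSpace.proj (0 : Fin 2) (γ t)) τ :=
        ((EuclideanSpace.proj (0 : Fin 2)).continuous.continuousAt).comp hdiff.continuousAt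
      have hval : ∀ t : ℝ, EuclideanSpace.proj (0 : Fin 2) (γ t) =
          2 / ((2 - α * t) ^ 2 + β ^ 2 * t ^ 2) * ((2 - α * t) * t) := by
        intro t
        show (γ t).ofLp 0 = _
        rw [hγ t]
        rfl
      have hval0 : EuclideanSpace.proj (0 : Fin 2) (γ τ) = 0 := by
        rw [hval τ, hw0]
        simp
      have hten : Tendsto (fun t => EuclideanSpace.proj (0 : Fin 2) (γ t)) (𝓝[≠] τ) (𝓝 0) := by
        rw [← hval0]
        exact hφ.continuousWithinAt.tendsto
      have hwne : ∀ t : ℝ, t ≠ τ → 2 - α*t ≠ 0 := by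
        intro t ht h
        apply ht
        have : α * t = α * τ := by linarith
        exact mul_left_cancel₀ hα this
      have hten2 : Tendsto (fun t => 2*t/(2-α*t)) (𝓝[≠] τ) (𝓝 0) := by
        refine hten.congr' ?_
        filter_upwards [self_mem_nhdsWithin] with t ht
        rw [hval t, hβ]
        have := hwne t ht
        field_simp
        ring
      have habs : Tendsto (fun t => |2*t/(2-α*t)|) (𝓝[≠] τ) (𝓝 0) := by
        simpa using hten2.abs
      have hA : Tendsto (fun t : ℝ => |2*t|) (𝓝[≠] τ) (𝓝 |2*τ|) :=
        ((continuous_const.mul continuous_id).abs.tendsto τ).mono_left nhdsWithin_le_nhds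
      have hB : Tendsto (fun t : ℝ => |2-α*t|) (𝓝[≠] τ) (𝓝[>] 0) := by
        rw [tendsto_nhdsWithin_iff]
        constructor
        · have : Tendsto (fun t : ℝ => |2-α*t|) (𝓝 τ) (𝓝 |2-α*τ|) :=
            ((continuous_const.sub (continuous_const.mul continuous_id)).abs.tendsto τ)
          rw [hw0] at this
          simpa using this.mono_left nhdsWithin_le_nhds
        · filter_upwards [self_mem_nhdsWithin] with t ht
          exact abs_pos.2 (hwne t ht)
      have hBi : Tendsto (fun t : ℝ => |2-α*t|⁻¹) (𝓝[≠] τ) atTop :=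
        tendsto_inv_nhdsGT_zero.comp hB
      have h2τ : 0 < |2*τ| := by
        rw [abs_pos]
        intro h
        apply hτ
        linarith
      have hAT : Tendsto (fun t : ℝ => |2*t| * |2-α*t|⁻¹) (𝓝[≠] τ) atTop :=
        Filter.Tendsto.pos_mul_atTop h2τ hA hBi
      have hAT2 : Tendsto (fun t => |2*t/(2-α*t)|) (𝓝[≠] τ) atTop := by
        refine hAT.congr (fun t => ?_)
        rw [abs_div, div_eq_mul_inv]
      exact not_tendsto_atTop_of_tendsto_nhds habs hAT2
    have hd0 : deriv γ τ = 0 := deriv_zero_of_not_differentiableAt hnd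
    exact hVV (by simp [hd0])
  · -- main case
    have hγeq : γ = fun t => (NF0 α β t / Dd α β t) • E0 + (NG0 α β t / Dd α β t) • E1 := by
      funext t
      rw [← WithLp.toLp_ofLp (x := γ t), hγ t, WithLp.toLp_smul, bridge, smul_add, smul_smul, smul_smul]
      exact ecomb (by simp only [NF0, Dd]; ring) (by simp only [NG0, Dd]; ring)
    have hctsD : Continuous (Dd α β) := by unfold Dd; fun_prop
    have hev : ∀ t : ℝ, Dd α β t ≠ 0 → ∀ᶠ s in 𝓝 t, Dd α β s ≠ 0 :=
      fun t h => hctsD.continuousAt.eventually_ne h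
    have h1 : ∀ t : ℝ, Dd α β t ≠ 0 → deriv γ t = Cv1 α β t := by
      intro t h
      rw [hγeq]
      exact (curve1 α β t h).deriv
    have h2 : ∀ t : ℝ, Dd α β t ≠ 0 → deriv (deriv γ) t = Cv2 α β t := by
      intro t h
      have heq : deriv γ =ᶠ[𝓝 t] Cv1 α β := (hev t h).mono (fun s hs => h1 s hs)
      rw [heq.deriv_eq, (curve2 α β t h).deriv]
    have h3 : deriv (deriv (deriv γ)) τ = Cv3 α β τ := by
      have heq : deriv (deriv γ) =ᶠ[𝓝 τ] Cv2 α β := (hev τ hD).mono (fun s hs => h2 s hs)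
      rw [heq.deriv_eq, (curve3 α β τ hD).deriv]
    rw [h1 τ hD] at hVV
    rw [h3, h2 τ hD, h1 τ hD]
    simp only [Cv1, Cv2, Cv3] at hVV ⊢
    rw [hInner] at hVV
    rw [hInner, hInner, hInner]
    have key : NF1 α β τ / Dd α β τ ^ 2 * (NF1 α β τ / Dd α β τ ^ 2) +
        NG1 α β τ / Dd α β τ ^ 2 * (NG1 α β τ / Dd α β τ ^ 2) =
        (NF1 α β τ^2 + NG1 α β τ^2) / Dd α β τ ^ 4 := by
      field_simp
    rw [key] at hVV ⊢
    have hN : NF1 α β τ^2 + NG1 α β τ^2 ≠ 0 := by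
      intro h0
      exact hVV (by rw [h0, zero_div])
    have hid1 : 2*NF3 α β τ*(NF1 α β τ^2+NG1 α β τ^2) =
        6*(NF1 α β τ*NF2 α β τ+NG1 α β τ*NG2 α β τ)*NF2 α β τ
          - 3*(NF2 α β τ^2+NG2 α β τ^2)*NF1 α β τ := by
      simp only [NF1, NF2, NF3, NG1, NG2, NG3]
      ring
    have hid2 : 2*NG3 α β τ*(NF1 α β τ^2+NG1 α β τ^2) =
        6*(NF1 α β τ*NF2 α β τ+NG1 α β τ*NG2 α β τ)*NG2 α β τ
          - 3*(NF2 α β τ^2+NG2 α β τ^2)*NG1 α β τ := by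
      simp only [NF1, NF2, NF3, NG1, NG2, NG3]
      ring
    rw [combo]
    exact ecomb (final_scalar_f hD hN hid1) (final_scalar_g hD hN hid2)
end

section
/- The curve τ ↦ (τ/(1−τ), 0, …, 0) in ℝⁿ, defined for τ ∈ [0,1), satisfies the flat conformal geodesic equation, has initial conditions γ(0) = 0, γ'(0) = (1,0,…,0), γ''(0) = (2,0,…,0), and ‖γ(τ)‖ → ∞ as τ → 1⁻. -/
open RealInnerProductSpace Filter

/-- The curve `τ ↦ (τ/(1−τ), 0, …, 0)` in `ℝⁿ` satisfies the flat conformal geodesic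
equation on `[0,1)`, has initial conditions `γ(0) = 0`, `γ'(0) = e₁`, `γ''(0) = 2e₁`,
and `‖γ(τ)‖ → ∞` as `τ → 1⁻`. -/
theorem stmt11 (n : ℕ) (hn : 1 ≤ n)
    (γ : ℝ → EuclideanSpace ℝ (Fin n))
    (hγ : ∀ τ : ℝ, γ τ =
      (τ / (1 - τ)) • EuclideanSpace.single (⟨0, by omega⟩ : Fin n) (1 : ℝ)) :
    (∀ τ ∈ Set.Ico (0 : ℝ) 1,
      deriv (deriv (deriv γ)) τ =
        (3 * (⟪deriv γ τ, deriv (deriv γ) τ⟫ / ⟪deriv γ τ, deriv γ τ⟫)) •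
            deriv (deriv γ) τ -
          (3 * ⟪deriv (deriv γ) τ, deriv (deriv γ) τ⟫ /
              (2 * ⟪deriv γ τ, deriv γ τ⟫)) • deriv γ τ) ∧
      γ 0 = 0 ∧
      deriv γ 0 = EuclideanSpace.single (⟨0, by omega⟩ : Fin n) (1 : ℝ) ∧
      deriv (deriv γ) 0 = EuclideanSpace.single (⟨0, by omega⟩ : Fin n) (2 : ℝ) ∧
      Tendsto (fun τ => ‖γ τ‖) (nhdsWithin 1 (Set.Iio 1)) atTop := by
  set i : Fin n := ⟨0, by omega⟩
  set e : EuclideanSpace ℝ (Fin n) := EuclideanSpace.single i (1 : ℝ) with he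
  have hγf : γ = fun τ : ℝ => (τ / (1 - τ)) • e := funext hγ
  -- derivative of the inverse-shift function
  have hp : ∀ τ : ℝ, τ ≠ 1 → HasDerivAt (fun t : ℝ => (1 - t)⁻¹) (((1 - τ)⁻¹) ^ 2) τ := by
    intro τ hτ
    have h1 : (1 : ℝ) - τ ≠ 0 := sub_ne_zero.mpr (Ne.symm hτ)
    have := ((hasDerivAt_id τ).const_sub 1).inv h1
    refine this.congr_deriv ?_
    simp only [id]
    field_simp
  -- first derivative
  have hV : ∀ τ : ℝ, τ ≠ 1 → HasDerivAt γ ((((1 - τ)⁻¹) ^ 2) • e) τ := by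
    intro τ hτ
    have h1 : (1 : ℝ) - τ ≠ 0 := sub_ne_zero.mpr (Ne.symm hτ)
    rw [hγf]
    have hdiv : HasDerivAt (fun t : ℝ => t / (1 - t)) (((1 - τ)⁻¹) ^ 2) τ := by
      have := (hasDerivAt_id τ).div ((hasDerivAt_id τ).const_sub 1) h1
      refine this.congr_deriv ?_
      simp only [id]
      field_simp
      ring
    exact hdiv.smul_const e
  have hne : ∀ τ : ℝ, τ < 1 → τ ≠ 1 := fun τ h => ne_of_lt h
  have hopen : IsOpen {t : ℝ | t ≠ 1} := isOpen_ne
  -- deriv γ agrees with the explicit formula near any τ ≠ 1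
  have hVev : ∀ τ : ℝ, τ ≠ 1 →
      deriv γ =ᶠ[nhds τ] fun t : ℝ => (((1 - t)⁻¹) ^ 2) • e := by
    intro τ hτ
    filter_upwards [hopen.mem_nhds hτ] with t ht
    exact (hV t ht).deriv
  -- second derivative
  have hA : ∀ τ : ℝ, τ ≠ 1 → HasDerivAt (deriv γ) ((2 * ((1 - τ)⁻¹) ^ 3) • e) τ := by
    intro τ hτ
    have h2 : HasDerivAt (fun t : ℝ => (((1 - t)⁻¹) ^ 2) • e) ((2 * ((1 - τ)⁻¹) ^ 3) • e) τ := by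
      have := ((hp τ hτ).pow 2).smul_const e
      refine this.congr_deriv ?_
      congr 1; ring
    exact h2.congr_of_eventuallyEq (hVev τ hτ)
  have hAev : ∀ τ : ℝ, τ ≠ 1 →
      deriv (deriv γ) =ᶠ[nhds τ] fun t : ℝ => (2 * ((1 - t)⁻¹) ^ 3) • e := by
    intro τ hτ
    filter_upwards [hopen.mem_nhds hτ] with t ht
    exact (hA t ht).deriv
  -- third derivative
  have hJ : ∀ τ : ℝ, τ ≠ 1 →
      HasDerivAt (deriv (deriv γ)) ((6 * ((1 - τ)⁻¹) ^ 4) • e) τ := by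
    intro τ hτ
    have h3 : HasDerivAt (fun t : ℝ => (2 * ((1 - t)⁻¹) ^ 3) • e)
        ((6 * ((1 - τ)⁻¹) ^ 4) • e) τ := by
      have := (((hp τ hτ).pow 3).const_mul 2).smul_const e
      refine this.congr_deriv ?_
      congr 1; ring
    exact h3.congr_of_eventuallyEq (hAev τ hτ)
  have hee : ⟪e, e⟫ = (1 : ℝ) := by
    simp [he, EuclideanSpace.inner_single_left, EuclideanSpace.single_apply]
  refine ⟨?_, ?_, ?_, ?_, ?_⟩
  · -- the geodesic equation
    intro τ hτ
    have hτ1 : τ ≠ 1 := ne_of_lt hτ.2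
    have h1 : (1 : ℝ) - τ ≠ 0 := sub_ne_zero.mpr (Ne.symm hτ1)
    set p : ℝ := (1 - τ)⁻¹ with hpdef
    have hp0 : p ≠ 0 := inv_ne_zero h1
    rw [(hV τ hτ1).deriv, (hA τ hτ1).deriv, (hJ τ hτ1).deriv]
    simp only [real_inner_smul_left, real_inner_smul_right, hee]
    rw [smul_smul, smul_smul, ← sub_smul]
    congr 1
    field_simp
    ring
  · rw [hγ 0]; simp
  · rw [(hV 0 (by norm_num)).deriv]; simp [he]
  · rw [(hA 0 (by norm_num)).deriv]
    have : (2 : ℝ) * ((1 - (0:ℝ))⁻¹) ^ 3 = 2 := by norm_num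
    rw [this, he]
    ext j
    simp [EuclideanSpace.single_apply]
  · -- blow-up as τ → 1⁻
    have hlim : Tendsto (fun τ : ℝ => τ / (1 - τ)) (nhdsWithin 1 (Set.Iio 1)) atTop := by
      have h1 : Tendsto (fun τ : ℝ => 1 - τ) (nhdsWithin 1 (Set.Iio 1))
          (nhdsWithin 0 (Set.Ioi 0)) := by
        apply tendsto_nhdsWithin_of_tendsto_nhds_of_eventually_within
        · have : Tendsto (fun τ : ℝ => 1 - τ) (nhds 1) (nhds (1 - 1)) :=
            (tendsto_const_nhds.sub tendsto_id)
          simpa using this.mono_left nhdsWithin_le_nhds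
        · filter_upwards [self_mem_nhdsWithin] with t ht
          exact Set.mem_Ioi.mpr (sub_pos.mpr ht)
      have hinv : Tendsto (fun τ : ℝ => (1 - τ)⁻¹) (nhdsWithin 1 (Set.Iio 1)) atTop :=
        tendsto_inv_nhdsGT_zero.comp h1
      have hnum : Tendsto (fun τ : ℝ => τ) (nhdsWithin 1 (Set.Iio 1)) (nhds 1) :=
        tendsto_id.mono_left nhdsWithin_le_nhds
      have := hnum.pos_mul_atTop one_pos hinv
      simpa [div_eq_mul_inv] using this
    have hnorm : ∀ τ : ℝ, τ / (1 - τ) ≤ ‖γ τ‖ := by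
      intro τ
      rw [hγ τ, norm_smul, he, EuclideanSpace.norm_single]
      simp only [norm_one, mul_one, Real.norm_eq_abs]
      exact le_abs_self _
    exact tendsto_atTop_mono hnorm hlim
end

section
/- Every straight line through the origin in ℝⁿ with a projective parameterization, and every round circle through the origin, arises as a solution of the flat conformal geodesic equation with suitable initial conditions: specifically, for every (α, β) ∈ ℝ² the initial value problem γ(0)=0, γ'(0)=e₁, γ''(0)=αe₁+βe₂ for the flat conformal geodesic equation restricted to the plane span(e₁,e₂) has a solution whose trajectory is a round circle if β ≠ 0 and a line if β = 0. -/
open RealInnerProductSpace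

noncomputable def myL {n : ℕ} (e₁ e₂ : EuclideanSpace ℝ (Fin n)) :
    ℂ →L[ℝ] EuclideanSpace ℝ (Fin n) :=
  Complex.reCLM.smulRight e₁ + Complex.imCLM.smulRight e₂

lemma myL_apply {n : ℕ} (e₁ e₂ : EuclideanSpace ℝ (Fin n)) (x : ℂ) :
    myL e₁ e₂ x = x.re • e₁ + x.im • e₂ := by
  simp [myL]

lemma myL_inner {n : ℕ} (hn : 2 ≤ n) (e₁ e₂ : EuclideanSpace ℝ (Fin n))
    (he₁ : e₁ = EuclideanSpace.single (⟨0, by linarith⟩ : Fin n) (1 : ℝ))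
    (he₂ : e₂ = EuclideanSpace.single (⟨1, by linarith⟩ : Fin n) (1 : ℝ))
    (x y : ℂ) :
    ⟪myL e₁ e₂ x, myL e₁ e₂ y⟫ = x.re * y.re + x.im * y.im := by
  rw [myL_apply, myL_apply, he₁, he₂]
  simp [inner_add_left, inner_add_right, real_inner_smul_left, real_inner_smul_right,
    EuclideanSpace.inner_single_left, EuclideanSpace.single_apply, Fin.mk.injEq]
  ring

lemma myL_norm {n : ℕ} (hn : 2 ≤ n) (e₁ e₂ : EuclideanSpace ℝ (Fin n))
    (he₁ : e₁ = EuclideanSpace.single (⟨0, by linarith⟩ : Fin n) (1 : ℝ))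
    (he₂ : e₂ = EuclideanSpace.single (⟨1, by linarith⟩ : Fin n) (1 : ℝ))
    (x : ℂ) : ‖myL e₁ e₂ x‖ = ‖x‖ := by
  have h := myL_inner hn e₁ e₂ he₁ he₂ x x
  rw [real_inner_self_eq_norm_sq] at h
  rw [Complex.norm_def, Complex.normSq_apply, ← h, Real.sqrt_sq (norm_nonneg _)]

lemma aux_key (c w : ℂ) (hw : w ≠ 0) :
    (24:ℂ)*c^2/w^4 =
      (3 * (((4/w^2 : ℂ).re*(8*c/w^3 : ℂ).re + (4/w^2 : ℂ).im*(8*c/w^3 : ℂ).im) /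
        ((4/w^2 : ℂ).re*(4/w^2 : ℂ).re + (4/w^2 : ℂ).im*(4/w^2 : ℂ).im))) • (8*c/w^3 : ℂ)
      - (3 * ((8*c/w^3 : ℂ).re*(8*c/w^3 : ℂ).re + (8*c/w^3 : ℂ).im*(8*c/w^3 : ℂ).im) /
        (2*((4/w^2 : ℂ).re*(4/w^2 : ℂ).re + (4/w^2 : ℂ).im*(4/w^2 : ℂ).im))) • (4/w^2 : ℂ) := by
  set v : ℂ := 4/w^2 with hv'
  set a : ℂ := 8*c/w^3 with ha'
  have hv : v ≠ 0 := div_ne_zero (by norm_num) (pow_ne_zero _ hw)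
  have hvn : v.re*v.re + v.im*v.im ≠ 0 := by
    have := Complex.normSq_pos.2 hv
    rw [Complex.normSq_apply] at this
    linarith
  set u : ℂ := c/w with hu
  set N : ℝ := v.re*v.re + v.im*v.im with hN
  have ha : a = 2*u*v := by rw [ha', hv', hu]; field_simp; ring
  have hb : (24:ℂ)*c^2/w^4 = 6*u^2*v := by rw [hv', hu]; field_simp; ring
  have h1 : v.re*a.re + v.im*a.im = 2*u.re*N := by
    rw [ha]; simp [Complex.mul_re, Complex.mul_im, hN]; ring
  have h2 : a.re*a.re + a.im*a.im = 4*(u.re*u.re+u.im*u.im)*N := by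
    rw [ha]; simp [Complex.mul_re, Complex.mul_im, hN]; ring
  have hs1 : 3 * (2*u.re*N / N) = 6*u.re := by field_simp; ring
  have hs2 : 3 * (4*(u.re*u.re+u.im*u.im)*N) / (2*N) = 6*(u.re*u.re+u.im*u.im) := by
    field_simp; ring
  rw [hb, h1, h2, ha, hs1, hs2, Complex.real_smul, Complex.real_smul]
  push_cast
  rw [Complex.ext_iff]
  simp [Complex.mul_re, Complex.mul_im, pow_two]
  constructor <;> ring

lemma hdz (c : ℂ) (τ : ℝ) (hw : 2 - c*τ ≠ 0) :
    HasDerivAt (fun t : ℝ => 2*(t:ℂ)/(2 - c*t)) (4/(2-c*τ)^2) τ := by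
  have hτ : HasDerivAt (fun t : ℝ => (t:ℂ)) 1 τ := by
    exact (hasDerivAt_id τ).ofReal_comp
  have hN : HasDerivAt (fun t : ℝ => 2*(t:ℂ)) 2 τ := by simpa using hτ.const_mul 2
  have hD : HasDerivAt (fun t : ℝ => 2 - c*(t:ℂ)) (-c) τ := by
    simpa using (hτ.const_mul c).const_sub 2
  have h := hN.div hD hw
  refine h.congr_deriv ?_
  field_simp
  ring

lemma hdz1 (c : ℂ) (τ : ℝ) (hw : 2 - c*τ ≠ 0) :
    HasDerivAt (fun t : ℝ => 4/(2 - c*t)^2) (8*c/(2-c*τ)^3) τ := by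
  have hτ : HasDerivAt (fun t : ℝ => (t:ℂ)) 1 τ := by
    exact (hasDerivAt_id τ).ofReal_comp
  have hD : HasDerivAt (fun t : ℝ => 2 - c*(t:ℂ)) (-c) τ := by
    simpa using (hτ.const_mul c).const_sub 2
  have hD2 : HasDerivAt (fun t : ℝ => (2 - c*(t:ℂ))^2) (-c*(2-c*τ) + (2-c*τ)*-c) τ := by
    simpa [pow_two, Pi.mul_def] using hD.mul hD
  have h := (hasDerivAt_const τ (4:ℂ)).div hD2 (pow_ne_zero _ hw)
  refine h.congr_deriv ?_
  field_simp
  ring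

lemma hdz2 (c : ℂ) (τ : ℝ) (hw : 2 - c*τ ≠ 0) :
    HasDerivAt (fun t : ℝ => 8*c/(2 - c*t)^3) (24*c^2/(2-c*τ)^4) τ := by
  have hτ : HasDerivAt (fun t : ℝ => (t:ℂ)) 1 τ := by
    exact (hasDerivAt_id τ).ofReal_comp
  have hD : HasDerivAt (fun t : ℝ => 2 - c*(t:ℂ)) (-c) τ := by
    simpa using (hτ.const_mul c).const_sub 2
  have hD3 : HasDerivAt (fun t : ℝ => (2 - c*(t:ℂ))^3)
      (-c*((2-c*τ)*(2-c*τ)) + (2-c*τ)*(-c*(2-c*τ) + (2-c*τ)*-c)) τ := by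
    have := hD.mul (hD.mul hD)
    simpa [pow_succ, pow_two, mul_assoc, Pi.mul_def] using this
  have h := (hasDerivAt_const τ (8*c)).div hD3 (pow_ne_zero _ hw)
  refine h.congr_deriv ?_
  field_simp
  ring

set_option maxHeartbeats 1000000 in
/-- For every `(α, β) ∈ ℝ²`, the initial value problem `γ(0) = 0`, `γ'(0) = e₁`,
`γ''(0) = αe₁ + βe₂` for the flat conformal geodesic equation (restricted to the
plane spanned by `e₁, e₂` in `ℝⁿ`) has a solution whose trajectory is a round circle
if `β ≠ 0` and lies on the line `ℝe₁` if `β = 0`. -/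
theorem stmt16 (n : ℕ) (hn : 2 ≤ n) (α β : ℝ)
    (e₁ : EuclideanSpace ℝ (Fin n)) (e₂ : EuclideanSpace ℝ (Fin n))
    (he₁ : e₁ = EuclideanSpace.single (⟨0, by omega⟩ : Fin n) (1 : ℝ))
    (he₂ : e₂ = EuclideanSpace.single (⟨1, by omega⟩ : Fin n) (1 : ℝ)) :
    ∃ γ : ℝ → EuclideanSpace ℝ (Fin n),
      γ 0 = 0 ∧ deriv γ 0 = e₁ ∧ deriv (deriv γ) 0 = α • e₁ + β • e₂ ∧
      (∀ τ : ℝ, ⟪deriv γ τ, deriv γ τ⟫ ≠ 0 →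
        deriv (deriv (deriv γ)) τ =
          (3 * (⟪deriv γ τ, deriv (deriv γ) τ⟫ / ⟪deriv γ τ, deriv γ τ⟫)) •
              deriv (deriv γ) τ -
            (3 * ⟪deriv (deriv γ) τ, deriv (deriv γ) τ⟫ /
                (2 * ⟪deriv γ τ, deriv γ τ⟫)) • deriv γ τ) ∧
      (β ≠ 0 → ∃ (c : EuclideanSpace ℝ (Fin n)) (r : ℝ), 0 < r ∧
        ∀ τ : ℝ, dist (γ τ) c = r) ∧
      (β = 0 → ∀ τ : ℝ, ∃ t : ℝ, γ τ = t • e₁) := by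
  classical
  set c : ℂ := (α : ℂ) + (β : ℂ) * Complex.I with hc
  have hcre : c.re = α := by simp [hc]
  have hcim : c.im = β := by simp [hc]
  set L : ℂ →L[ℝ] EuclideanSpace ℝ (Fin n) := myL e₁ e₂ with hL
  set z : ℝ → ℂ := fun t => 2*(t:ℂ)/(2 - c*t) with hz
  have hcomp : ∀ (f : ℝ → ℂ) (τ : ℝ) (v : ℂ), HasDerivAt f v τ →
      HasDerivAt (fun t => L (f t)) (L v) τ := by
    intro f τ v h
    exact L.hasFDerivAt.comp_hasDerivAt τ h
  -- first derivative
  have hd1 : ∀ τ : ℝ, 2 - c*τ ≠ 0 → deriv (fun t => L (z t)) τ = L (4/(2-c*τ)^2) :=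
    fun τ hw => (hcomp z τ _ (hdz c τ hw)).deriv
  -- neighborhood of nonvanishing
  have hev : ∀ τ : ℝ, 2 - c*τ ≠ 0 → ∀ᶠ x in nhds τ, 2 - c*(x:ℝ) ≠ 0 := by
    intro τ hw
    have hcont : ContinuousAt (fun x : ℝ => 2 - c*(x:ℝ)) τ := by fun_prop
    exact hcont.eventually_ne hw
  -- second derivative
  have hd2 : ∀ τ : ℝ, 2 - c*τ ≠ 0 →
      deriv (deriv (fun t => L (z t))) τ = L (8*c/(2-c*τ)^3) := by
    intro τ hw
    have he : deriv (fun t => L (z t)) =ᶠ[nhds τ] fun x => L (4/(2-c*x)^2) := by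
      filter_upwards [hev τ hw] with x hx using hd1 x hx
    rw [he.deriv_eq]
    exact (hcomp _ τ _ (hdz1 c τ hw)).deriv
  -- third derivative
  have hd3 : ∀ τ : ℝ, 2 - c*τ ≠ 0 →
      deriv (deriv (deriv (fun t => L (z t)))) τ = L (24*c^2/(2-c*τ)^4) := by
    intro τ hw
    have he : deriv (deriv (fun t => L (z t))) =ᶠ[nhds τ] fun x => L (8*c/(2-c*x)^3) := by
      filter_upwards [hev τ hw] with x hx using hd2 x hx
    rw [he.deriv_eq]
    exact (hcomp _ τ _ (hdz2 c τ hw)).deriv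
  have hw0 : (2:ℂ) - c*((0:ℝ):ℂ) ≠ 0 := by norm_num
  refine ⟨fun t => L (z t), ?_, ?_, ?_, ?_, ?_, ?_⟩
  · -- γ 0 = 0
    simp [hz]
  · -- deriv γ 0 = e₁
    rw [hd1 0 hw0]
    have : (4 : ℂ)/(2 - c*((0:ℝ):ℂ))^2 = 1 := by norm_num
    rw [this, hL, myL_apply]
    simp
  · -- second deriv at 0
    rw [hd2 0 hw0]
    have : (8:ℂ)*c/(2 - c*((0:ℝ):ℂ))^3 = c := by norm_num
    rw [this, hL, myL_apply, hcre, hcim]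
  · -- the ODE
    intro τ hVV
    by_cases hw : 2 - c*(τ:ℂ) ≠ 0
    · rw [hd1 τ hw, hd2 τ hw, hd3 τ hw]
      rw [hL, myL_inner hn e₁ e₂ he₁ he₂, myL_inner hn e₁ e₂ he₁ he₂,
        myL_inner hn e₁ e₂ he₁ he₂]
      rw [← map_smul, ← map_smul, ← map_sub]
      exact congrArg _ (aux_key c _ hw)
    · push_neg at hw
      exfalso
      apply hVV
      have hcτ : c * (τ:ℂ) = 2 := (sub_eq_zero.mp hw).symm
      have hτ0 : τ ≠ 0 := by
        intro h; rw [h] at hcτ; simp at hcτ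
      have habs : ‖c‖ * |τ| = 2 := by
        have := congrArg (‖·‖) hcτ
        simpa [norm_mul, Complex.norm_real] using this
      have hτpos : (0:ℝ) < |τ| := abs_pos.mpr hτ0
      have h0 : deriv (fun t => L (z t)) τ = 0 := by
        apply deriv_zero_of_not_differentiableAt
        intro hdiff
        have hcont : ContinuousAt (fun t => ‖z t‖) τ := by
          have h2 := hdiff.continuousAt.norm
          simp only [hL, myL_norm hn e₁ e₂ he₁ he₂] at h2
          exact h2
        have hz0 : ‖z τ‖ = 0 := by
          simp only [hz]
          rw [hw]
          simp
        have hlt : ∀ᶠ x in nhds τ, ‖z x‖ < 1 := by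
          have h3 := hcont.tendsto
          rw [hz0] at h3
          exact h3.eventually_lt_const one_pos
        rw [Metric.eventually_nhds_iff] at hlt
        obtain ⟨δ, hδpos, hδ⟩ := hlt
        set ε : ℝ := min (δ/2) (min (|τ|/2) (τ^2/2)) with hε
        have hεpos : 0 < ε := by
          apply lt_min (by linarith)
          exact lt_min (by linarith) (by positivity)
        have hεδ : ε < δ := lt_of_le_of_lt (min_le_left _ _) (by linarith)
        have hετ : ε ≤ |τ|/2 := le_trans (min_le_right _ _) (min_le_left _ _)
        have hετ2 : ε ≤ τ^2/2 := le_trans (min_le_right _ _) (min_le_right _ _)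
        have hdist : dist (τ + ε) τ < δ := by
          rw [Real.dist_eq]
          rw [show τ + ε - τ = ε by ring, abs_of_pos hεpos]
          exact hεδ
        have hlt1 := hδ hdist
        have hwx : (2:ℂ) - c*(((τ+ε) : ℝ):ℂ) = -(c * (ε:ℂ)) := by
          push_cast
          rw [mul_add, hcτ]
          ring
        have habsx : ‖z (τ+ε)‖ = (2*|τ+ε|) / (‖c‖ * ε) := by
          simp only [hz]
          rw [hwx, norm_div]
          rw [show ‖-(c * (ε:ℂ))‖ = ‖c * (ε:ℂ)‖ by
            exact norm_neg _]
          rw [show (2:ℂ)*((τ+ε:ℝ):ℂ) = (((2*(τ+ε)):ℝ):ℂ) by push_cast; ring]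
          rw [Complex.norm_real, Real.norm_eq_abs, norm_mul, Complex.norm_real, Real.norm_eq_abs]
          rw [abs_of_pos hεpos, abs_mul]
          rw [show |(2:ℝ)| = 2 by norm_num]
        have hcpos : 0 < ‖c‖ := by
          rcases (mul_pos_iff.mp (habs ▸ (by norm_num : (0:ℝ) < 2))) with ⟨h,_⟩|⟨h,_⟩
          · exact h
          · linarith
        have hden : 0 < ‖c‖ * ε := mul_pos hcpos hεpos
        rw [habsx, div_lt_one hden] at hlt1
        have h1 : |τ + ε| ≥ |τ| - ε := by
          have h4 : |τ| ≤ |τ+ε| + |ε| := by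
            calc |τ| = |(τ+ε) + (-ε)| := by ring_nf
            _ ≤ |τ+ε| + |(-ε)| := abs_add_le _ _
            _ = |τ+ε| + |ε| := by rw [abs_neg]
          rw [abs_of_pos hεpos] at h4
          linarith
        have h5 : ‖c‖ * ε * |τ| = 2 * ε := by
          calc ‖c‖ * ε * |τ| = (‖c‖ * |τ|) * ε := by ring
          _ = 2 * ε := by rw [habs]
        have hsq : |τ| * |τ| = τ^2 := by rw [abs_mul_abs_self]; ring
        have p1 := mul_lt_mul_of_pos_right hlt1 hτpos
        have p2 := mul_le_mul_of_nonneg_right h1 (le_of_lt hτpos)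
        have p3 := mul_le_mul_of_nonneg_right hετ (le_of_lt hτpos)
        nlinarith [p1, p2, p3, h5, hsq, hετ2]
      rw [h0]
      simp
  · -- circle
    intro hβ
    have hβc : (β:ℂ) ≠ 0 := Complex.ofReal_ne_zero.mpr hβ
    have hwa : ∀ τ:ℝ, 2 - c*(τ:ℂ) ≠ 0 := by
      intro τ h
      have hcτ : c * (τ:ℂ) = 2 := (sub_eq_zero.mp h).symm
      have him : β * τ = 0 := by
        have := congrArg Complex.im hcτ
        simpa [Complex.mul_im, hc] using this
      rcases mul_eq_zero.mp him with h'|h'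
      · exact hβ h'
      · rw [h'] at hcτ
        simp at hcτ
    refine ⟨L (Complex.I/(β:ℂ)), |β|⁻¹, by positivity, ?_⟩
    intro τ
    rw [dist_eq_norm, ← map_sub, hL, myL_norm hn e₁ e₂ he₁ he₂]
    have hzc : z τ - Complex.I/(β:ℂ) =
        (-Complex.I * (starRingEnd ℂ) (2 - c*(τ:ℂ)))/((β:ℂ)*(2 - c*(τ:ℂ))) := by
      simp only [hz]
      rw [div_sub_div _ _ (hwa τ) hβc,
        div_eq_div_iff (mul_ne_zero (hwa τ) hβc) (mul_ne_zero hβc (hwa τ))]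
      simp [hc, Complex.ext_iff, Complex.mul_re, Complex.mul_im]
      constructor <;> ring
    rw [hzc, norm_div, norm_mul, norm_mul, Complex.norm_conj, Complex.norm_real, Real.norm_eq_abs]
    rw [show ‖-Complex.I‖ = 1 by simp, one_mul]
    have hwabs : ‖2 - c*(τ:ℂ)‖ ≠ 0 := norm_ne_zero_iff.mpr (hwa τ)
    field_simp
  · -- line
    intro hβ τ
    refine ⟨(2*τ)/(2 - α*τ), ?_⟩
    have hzr : z τ = (((2*τ)/(2 - α*τ) : ℝ) : ℂ) := by
      simp only [hz]
      rw [hc, hβ]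
      push_cast
      norm_num
    show L (z τ) = (2*τ/(2 - α*τ)) • e₁
    rw [hzr, hL, myL_apply]
    simp only [Complex.ofReal_re, Complex.ofReal_im, zero_smul, add_zero]
end
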